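/- arXiv:0804.2868 — 2 statements merged into one kernel-verified Lean document; each statement's English description precedes it below -/
import Mathlib

section
/- For 0 < λ ≤ 1 and x ∈ (-π/2, π/2), with ζ(x,λ) = arcsin(√(1 - λ² cos² x)) and φ(x) = π/2 - x - ζ(x,λ), one has cos φ / cos x = λ sin x + sin ζ, and dφ/dx = -(λ sin x + sin ζ)/sin ζ (wherever sin ζ ≠ 0). -/
open Real

noncomputable def zeta (x lam : ℝ) : ℝ :=
  Real.arcsin (Real.sqrt (1 - lam^2 * Real.cos x ^ 2))

noncomputable def phiOfx (lam x : ℝ) : ℝ := π/2 - x - zeta x lam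

theorem stmt_3 (lam x : ℝ) (hlam : 0 < lam) (hlam1 : lam ≤ 1)
    (hx : x ∈ Set.Ioo (-(π/2)) (π/2)) :
    Real.cos (phiOfx lam x) / Real.cos x = lam * Real.sin x + Real.sin (zeta x lam) ∧
    (Real.sin (zeta x lam) ≠ 0 →
      HasDerivAt (phiOfx lam)
        (-((lam * Real.sin x + Real.sin (zeta x lam)) / Real.sin (zeta x lam))) x) := by
  obtain ⟨hx1, hx2⟩ := hx
  have hc : 0 < Real.cos x := Real.cos_pos_of_mem_Ioo ⟨hx1, hx2⟩
  have hc1 : Real.cos x ≤ 1 := Real.cos_le_one x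
  have hlc0 : 0 ≤ lam * Real.cos x := by positivity
  have hlc1 : lam * Real.cos x ≤ 1 := by nlinarith
  have harg0 : 0 ≤ 1 - lam^2 * Real.cos x ^ 2 := by nlinarith
  have harg1 : 1 - lam^2 * Real.cos x ^ 2 ≤ 1 := by nlinarith
  set A := 1 - lam^2 * Real.cos x ^ 2 with hA
  have hy1 : Real.sqrt A ≤ 1 := Real.sqrt_le_one.mpr harg1
  have hy0 : 0 ≤ Real.sqrt A := Real.sqrt_nonneg A
  have hsin : Real.sin (zeta x lam) = Real.sqrt A :=
    Real.sin_arcsin (by linarith) hy1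
  have hsq : Real.sqrt A ^ 2 = A := Real.sq_sqrt harg0
  have hcos : Real.cos (zeta x lam) = lam * Real.cos x := by
    rw [zeta, Real.cos_arcsin]
    have h1 : 1 - Real.sqrt A ^ 2 = (lam * Real.cos x)^2 := by rw [hsq, hA]; ring
    rw [show (1 - lam ^ 2 * Real.cos x ^ 2) = A from rfl, h1, Real.sqrt_sq hlc0]
  constructor
  · have h : phiOfx lam x = π/2 - (x + zeta x lam) := by rw [phiOfx]; ring
    rw [h, Real.cos_pi_div_two_sub, Real.sin_add, hcos]
    field_simp
  · intro hne
    rw [hsin] at hne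
    have hAne : A ≠ 0 := fun h => hne (by rw [h, Real.sqrt_zero])
    have hApos : 0 < A := lt_of_le_of_ne harg0 (Ne.symm hAne)
    have hspos : 0 < Real.sqrt A := Real.sqrt_pos.mpr hApos
    have hyne1 : Real.sqrt A ≠ 1 := by
      intro h
      have hA1 : A = 1 := by nlinarith [hsq]
      nlinarith [hA1.symm.trans hA, pow_pos (mul_pos hlam hc) 2]
    have hf : HasDerivAt (fun t => 1 - lam^2 * Real.cos t ^ 2)
        (lam^2 * (2 * Real.sin x * Real.cos x)) x := by
      have h1 : HasDerivAt Real.cos (-Real.sin x) x := Real.hasDerivAt_cos x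
      have h3 := (h1.pow 2).const_mul (lam^2)
      have h4 := (hasDerivAt_const x (1:ℝ)).sub h3
      have h5 := h4.congr_deriv (show _ = lam^2 * (2 * Real.sin x * Real.cos x) by push_cast; ring)
      exact h5
    have hsqrt : HasDerivAt (fun t => Real.sqrt (1 - lam^2 * Real.cos t ^ 2))
        (lam^2 * (2 * Real.sin x * Real.cos x) / (2 * Real.sqrt A)) x := hf.sqrt hAne
    have harcsin : HasDerivAt Real.arcsin (1 / Real.sqrt (1 - Real.sqrt A ^ 2)) (Real.sqrt A) :=
      Real.hasDerivAt_arcsin (by linarith) hyne1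
    have hzeta : HasDerivAt (fun t => zeta t lam)
        ((1 / Real.sqrt (1 - Real.sqrt A ^ 2)) *
          (lam^2 * (2 * Real.sin x * Real.cos x) / (2 * Real.sqrt A))) x := by
      have := harcsin.comp x hsqrt
      exact this
    have hphi : HasDerivAt (phiOfx lam)
        ((0 - 1) - (1 / Real.sqrt (1 - Real.sqrt A ^ 2)) *
          (lam^2 * (2 * Real.sin x * Real.cos x) / (2 * Real.sqrt A))) x := by
      have := (((hasDerivAt_const x (π/2)).sub (hasDerivAt_id x)).sub hzeta)
      exact this
    have hcs : Real.sqrt (1 - Real.sqrt A ^ 2) = lam * Real.cos x := by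
      have h1 : 1 - Real.sqrt A ^ 2 = (lam * Real.cos x)^2 := by rw [hsq, hA]; ring
      rw [h1, Real.sqrt_sq hlc0]
    rw [hsin]
    convert hphi using 1
    rw [hcs]
    have hlcne : lam * Real.cos x ≠ 0 := by positivity
    field_simp
    ring
end

section
/- Consider the ODE system dλ/dτ = -(3/2)λ(β-1), dv/dτ = -(3/2)v, dθ/dτ = -(3π/8)λ for the retroreflecting rough disk. If β = 1, then λ(τ) = λ₀ is constant, v(τ) = v₀ e^{-3τ/2}, and θ(τ) = θ₀ - (3π/8)λ₀ τ; in particular, the trajectory (with arc length s proportional to τ) is a circle traversed in the sense opposite to the disk's rotation. If β > 1, then λ(τ) = λ₀ e^{-3(β-1)τ/2} → 0 and θ(τ) converges to a finite limit θ_∞ with θ(τ) - θ_∞ = (π λ₀/(4(β-1))) e^{-3(β-1)τ/2}, and λ = (4/π)(β-1)(θ - θ_∞). -/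
open Real Filter

private lemma exp_sol (f : ℝ → ℝ) (c : ℝ) (hf : ∀ τ, HasDerivAt f (c * f τ) τ) :
    ∀ τ, f τ = f 0 * Real.exp (c * τ) := by
  intro τ
  have hd : ∀ x : ℝ, HasDerivAt (fun y => f y * Real.exp (-c * y)) 0 x := by
    intro x
    have hexp : HasDerivAt (fun y : ℝ => Real.exp (-c * y)) (Real.exp (-c * x) * (-c)) x := by
      simpa using ((hasDerivAt_id x).const_mul (-c)).exp
    have H0 := (hf x).mul hexp
    refine H0.congr_deriv ?_
    ring
  have key : ∀ x y : ℝ, f x * Real.exp (-c * x) = f y * Real.exp (-c * y) := by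
    apply is_const_of_deriv_eq_zero
    · intro x; exact (hd x).differentiableAt
    · intro x; exact (hd x).deriv
  have h0 := key τ 0
  simp only [mul_zero, Real.exp_zero, mul_one] at h0
  have hmul : Real.exp (-c * τ) * Real.exp (c * τ) = 1 := by
    rw [← Real.exp_add, neg_mul, neg_add_cancel, Real.exp_zero]
  calc f τ = f τ * (Real.exp (-c * τ) * Real.exp (c * τ)) := by rw [hmul, mul_one]
    _ = (f τ * Real.exp (-c * τ)) * Real.exp (c * τ) := by ring
    _ = f 0 * Real.exp (c * τ) := by rw [h0]

private lemma lin_sol (f : ℝ → ℝ) (a : ℝ) (hf : ∀ τ, HasDerivAt f a τ) :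
    ∀ τ, f τ = f 0 + a * τ := by
  intro τ
  have hd : ∀ x : ℝ, HasDerivAt (fun y => f y - a * y) 0 x := by
    intro x
    have hid : HasDerivAt (fun y : ℝ => a * y) a x := by
      simpa using (hasDerivAt_id x).const_mul a
    have H0 := (hf x).sub hid
    refine H0.congr_deriv ?_
    ring
  have key : ∀ x y : ℝ, f x - a * x = f y - a * y := by
    apply is_const_of_deriv_eq_zero
    · intro x; exact (hd x).differentiableAt
    · intro x; exact (hd x).deriv
  have h0 := key τ 0
  simp only [mul_zero, sub_zero] at h0
  linarith

theorem stmt_18 (l v θ : ℝ → ℝ) (β lam₀ v₀ θ₀ : ℝ)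
    (hl : ∀ τ, HasDerivAt l (-(3/2) * l τ * (β - 1)) τ)
    (hv : ∀ τ, HasDerivAt v (-(3/2) * v τ) τ)
    (hθ : ∀ τ, HasDerivAt θ (-(3 * π / 8) * l τ) τ)
    (hl0 : l 0 = lam₀) (hv0 : v 0 = v₀) (hθ0 : θ 0 = θ₀) :
    (β = 1 →
      ∀ τ, l τ = lam₀ ∧ v τ = v₀ * Real.exp (-(3/2) * τ) ∧
        θ τ = θ₀ - (3 * π / 8) * lam₀ * τ) ∧
    (β > 1 →
      (∀ τ, l τ = lam₀ * Real.exp (-(3 * (β - 1) / 2) * τ)) ∧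
      Tendsto l atTop (nhds 0) ∧
      ∃ θinf : ℝ, Tendsto θ atTop (nhds θinf) ∧
        (∀ τ, θ τ - θinf = (π * lam₀ / (4 * (β - 1))) * Real.exp (-(3 * (β - 1) / 2) * τ)) ∧
        (∀ τ, l τ = (4 / π) * (β - 1) * (θ τ - θinf))) := by
  have hvs : ∀ τ, v τ = v₀ * Real.exp (-(3/2) * τ) := by
    have h := exp_sol v (-(3/2)) (fun τ => by simpa using hv τ)
    simpa [hv0] using h
  have hls : ∀ τ, l τ = lam₀ * Real.exp (-(3 * (β - 1) / 2) * τ) := by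
    have hder : ∀ τ, HasDerivAt l (-(3 * (β - 1) / 2) * l τ) τ := by
      intro τ
      have h := hl τ
      convert h using 1
      ring
    have h := exp_sol l (-(3 * (β - 1) / 2)) hder
    simpa [hl0] using h
  constructor
  · intro hβ τ
    have hlc : l τ = lam₀ := by
      have h := hls τ
      rw [hβ] at h
      simpa using h
    refine ⟨hlc, hvs τ, ?_⟩
    have hθd : ∀ σ, HasDerivAt θ (-(3 * π / 8) * lam₀) σ := by
      intro σ
      have hc : l σ = lam₀ := by
        have h := hls σ
        rw [hβ] at h
        simpa using h
      simpa [hc] using hθ σ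
    have h := lin_sol θ (-(3 * π / 8) * lam₀) hθd τ
    rw [h, hθ0]; ring
  · intro hβ
    have hβ0 : (0:ℝ) < β - 1 := by linarith
    set k : ℝ := 3 * (β - 1) / 2 with hk
    have hkpos : 0 < k := by positivity
    have hltend : Tendsto l atTop (nhds 0) := by
      have hexp0 : Tendsto (fun τ => Real.exp (-k * τ)) atTop (nhds 0) := by
        have h1 : Tendsto (fun τ : ℝ => k * τ) atTop atTop :=
          tendsto_id.const_mul_atTop hkpos
        have h2 := Real.tendsto_exp_neg_atTop_nhds_zero.comp h1
        simpa only [Function.comp_def, neg_mul] using h2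
      have h : Tendsto (fun τ => lam₀ * Real.exp (-k * τ)) atTop (nhds (lam₀ * 0)) :=
        Tendsto.const_mul _ hexp0
      rw [mul_zero] at h
      exact Tendsto.congr (fun τ => (hls τ).symm) h
    refine ⟨hls, hltend, ?_⟩
    set A : ℝ := π * lam₀ / (4 * (β - 1)) with hA
    have hkey : ∀ τ, θ τ = θ₀ - A + A * Real.exp (-k * τ) := by
      have hd : ∀ x : ℝ, HasDerivAt (fun y => θ y - A * Real.exp (-k * y)) 0 x := by
        intro x
        have hexp : HasDerivAt (fun y : ℝ => Real.exp (-k * y)) (Real.exp (-k * x) * (-k)) x := by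
          simpa using ((hasDerivAt_id x).const_mul (-k)).exp
        have H0 := (hθ x).sub (hexp.const_mul A)
        refine H0.congr_deriv ?_
        rw [hls x]
        have hAk : A * (Real.exp (-k * x) * (-k)) =
            -(3 * π / 8) * (lam₀ * Real.exp (-k * x)) := by
          rw [hA, hk]
          field_simp
          ring
        rw [hAk]; ring
      have hconst : ∀ x y : ℝ, θ x - A * Real.exp (-k * x) = θ y - A * Real.exp (-k * y) := by
        apply is_const_of_deriv_eq_zero
        · intro x; exact (hd x).differentiableAt
        · intro x; exact (hd x).deriv
      intro τ
      have h0 := hconst τ 0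
      simp only [mul_zero, Real.exp_zero, mul_one] at h0
      rw [hθ0] at h0
      linarith
    refine ⟨θ₀ - A, ?_, ?_, ?_⟩
    · have hexp0 : Tendsto (fun τ => Real.exp (-k * τ)) atTop (nhds 0) := by
        have h1 : Tendsto (fun τ : ℝ => k * τ) atTop atTop :=
          tendsto_id.const_mul_atTop hkpos
        have h2 := Real.tendsto_exp_neg_atTop_nhds_zero.comp h1
        simpa only [Function.comp_def, neg_mul] using h2
      have h : Tendsto (fun τ => θ₀ - A + A * Real.exp (-k * τ)) atTop
          (nhds (θ₀ - A + A * 0)) := Tendsto.const_add _ (Tendsto.const_mul _ hexp0)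
      rw [mul_zero, add_zero] at h
      exact Tendsto.congr (fun τ => (hkey τ).symm) h
    · intro τ
      rw [hkey τ]; ring
    · intro τ
      rw [hls τ, hkey τ, hA]
      have hπ : π ≠ 0 := Real.pi_ne_zero
      field_simp
      ring
end
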